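/- Let 𝔄(𝒢) be a symmetrically normed ideal of bounded operators on a separable Hilbert space 𝒢, let C be a bounded operator on a Hilbert space ℋ, and suppose A ∈ 𝔄(𝒢) admits the factorization A = B*B with B : 𝒢 → ℋ bounded. Then B*CB ∈ 𝔄(𝒢). -/

import Mathlib

set_option maxHeartbeats 1000000
set_option synthInstance.maxHeartbeats 400000

noncomputable section

/-- A symmetrically normed ideal `𝔄(G)` of `B(G)`: a two-sided ideal of compact
operators which is a Banach space with respect to a norm `nrm` satisfying
`‖CAB‖_𝔄 ≤ ‖C‖ ‖A‖_𝔄 ‖B‖` and `‖A‖_𝔄 = s₁(A) = ‖A‖` for rank-one `A`. -/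
structure SymmNormedIdeal (G : Type*) [NormedAddCommGroup G]
    [InnerProductSpace ℂ G] where
  carrier : Set (G →L[ℂ] G)
  compact_mem : ∀ A ∈ carrier, IsCompactOperator A
  rankOne_mem : ∀ u v : G, ((innerSL ℂ u).smulRight v) ∈ carrier
  add_mem : ∀ A ∈ carrier, ∀ B ∈ carrier, A + B ∈ carrier
  comp_mem : ∀ A ∈ carrier, ∀ B C : G →L[ℂ] G, C ∘L A ∘L B ∈ carrier
  nrm : (G →L[ℂ] G) → ℝ
  nrm_nonneg : ∀ A, 0 ≤ nrm A
  nrm_eq_zero : ∀ A ∈ carrier, nrm A = 0 → A = 0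
  nrm_add : ∀ A ∈ carrier, ∀ B ∈ carrier, nrm (A + B) ≤ nrm A + nrm B
  nrm_smul : ∀ A ∈ carrier, ∀ c : ℂ, nrm (c • A) = ‖c‖ * nrm A
  nrm_comp : ∀ A ∈ carrier, ∀ B C : G →L[ℂ] G, nrm (C ∘L A ∘L B) ≤ ‖C‖ * nrm A * ‖B‖
  nrm_rankOne : ∀ u v : G, nrm ((innerSL ℂ u).smulRight v) = ‖(innerSL ℂ u).smulRight v‖
  complete : ∀ f : ℕ → (G →L[ℂ] G), (∀ n, f n ∈ carrier) →
    (∀ ε : ℝ, 0 < ε → ∃ N : ℕ, ∀ m n : ℕ, N ≤ m → N ≤ n → nrm (f m - f n) < ε) →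
    ∃ A ∈ carrier, ∀ ε : ℝ, 0 < ε → ∃ N : ℕ, ∀ n : ℕ, N ≤ n → nrm (f n - A) < ε

open ContinuousLinearMap Complex

/-- The carrier of a symmetrically normed ideal is closed under scalar multiplication. -/
lemma SymmNormedIdeal.smul_mem {G : Type*} [NormedAddCommGroup G] [InnerProductSpace ℂ G]
    (I : SymmNormedIdeal G) {A : G →L[ℂ] G} (hA : A ∈ I.carrier) (c : ℂ) :
    c • A ∈ I.carrier := by
  have := I.comp_mem A hA 1 (c • 1)
  simpa [ContinuousLinearMap.smul_comp, ContinuousLinearMap.one_def,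
    ContinuousLinearMap.comp_id, ContinuousLinearMap.id_comp] using this

/-- Douglas-type factorization: if `‖Q x‖ ≤ ‖P x‖` for all `x`, there is a bounded
operator `R` with `R (P x) = Q x` for all `x`. -/
lemma douglas_aux {G : Type*} [NormedAddCommGroup G] [InnerProductSpace ℂ G]
    [CompleteSpace G] (P Q : G →L[ℂ] G) (h : ∀ x, ‖Q x‖ ≤ ‖P x‖) :
    ∃ R : G →L[ℂ] G, ∀ x, R (P x) = Q x := by
  set Pl := (P : G →ₗ[ℂ] G)
  set Ql := (Q : G →ₗ[ℂ] G)
  have hker : LinearMap.ker Pl ≤ LinearMap.ker Ql := by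
    intro x hx
    rw [LinearMap.mem_ker] at hx ⊢
    have := h x
    rw [show Pl x = P x from rfl] at hx
    rw [hx, norm_zero] at this
    exact norm_le_zero_iff.mp this
  set K : Submodule ℂ G := LinearMap.range Pl with hK
  set l : K →ₗ[ℂ] G :=
    ((LinearMap.ker Pl).liftQ Ql hker).comp (Pl.quotKerEquivRange).symm.toLinearMap with hl
  have hlP : ∀ x : G, l ⟨Pl x, ⟨x, rfl⟩⟩ = Q x := by
    intro x
    simp only [hl, LinearMap.coe_comp, Function.comp_apply, LinearEquiv.coe_coe]
    erw [LinearMap.quotKerEquivRange_symm_apply_image]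
    simp [Submodule.liftQ_apply]
    rfl
  have hbound : ∀ y : K, ‖l y‖ ≤ 1 * ‖y‖ := by
    rintro ⟨y, x, rfl⟩
    rw [one_mul]
    have : l ⟨Pl x, ⟨x, rfl⟩⟩ = Q x := hlP x
    rw [this]
    exact h x
  set l' : K →L[ℂ] G := l.mkContinuous 1 hbound with hl'
  have hl'P : ∀ x : G, l' ⟨Pl x, ⟨x, rfl⟩⟩ = Q x := hlP
  set Kc := K.topologicalClosure with hKc
  haveI : CompleteSpace Kc := K.isClosed_topologicalClosure.completeSpace_coe
  set e : K →L[ℂ] Kc :=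
    ContinuousLinearMap.codRestrict K.subtypeL Kc
      (fun y => K.le_topologicalClosure y.2) with he
  have h_isom : Isometry e := AddMonoidHomClass.isometry_of_norm e (fun y => rfl)
  have h_e : IsUniformInducing e := h_isom.isUniformInducing
  have h_dense : DenseRange e := by
    intro z
    have hz : (z : G) ∈ closure (K : Set G) := by
      have h2 := z.2
      exact (Submodule.topologicalClosure_coe K) ▸ h2
    rw [closure_subtype]
    have himg : (Subtype.val '' Set.range e : Set G) = (K : Set G) := by
      ext v
      constructor
      · rintro ⟨z', ⟨y, rfl⟩, rfl⟩
        exact y.2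
      · intro hv
        exact ⟨e ⟨v, hv⟩, ⟨⟨v, hv⟩, rfl⟩, rfl⟩
    rw [himg]
    exact hz
  set R0 : Kc →L[ℂ] G := l'.extend e with hR0
  refine ⟨R0 ∘L (Kc.orthogonalProjectionOnto), fun x => ?_⟩
  have hmem : P x ∈ Kc := K.le_topologicalClosure ⟨x, rfl⟩
  have hproj : Kc.orthogonalProjectionOnto (P x) = ⟨P x, hmem⟩ :=
    Kc.orthogonalProjectionOnto_mem_subspace_eq_self ⟨P x, hmem⟩
  have heq : (⟨P x, hmem⟩ : Kc) = e ⟨Pl x, ⟨x, rfl⟩⟩ := Subtype.ext rfl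
  rw [ContinuousLinearMap.comp_apply, hproj, heq, ContinuousLinearMap.extend_eq _ h_dense h_e]
  exact hl'P x

/-- Solidity-type lemma: if `B*B` belongs to the ideal and `‖D x‖ ≤ ‖B x‖`
pointwise, then `D*D` belongs to the ideal.  This is proved by writing
`D*D = R (B*B) R*` via square roots and the Douglas factorization. -/
lemma SymmNormedIdeal.adjoint_comp_self_mem
    {G H : Type*} [NormedAddCommGroup G] [InnerProductSpace ℂ G]
    [NormedAddCommGroup H] [InnerProductSpace ℂ H]
    [CompleteSpace G] [CompleteSpace H]
    (I : SymmNormedIdeal G) (B D : G →L[ℂ] H)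
    (hB : ContinuousLinearMap.adjoint B ∘L B ∈ I.carrier)
    (hD : ∀ x, ‖D x‖ ≤ ‖B x‖) :
    ContinuousLinearMap.adjoint D ∘L D ∈ I.carrier := by
  set S := ContinuousLinearMap.adjoint B ∘L B with hSdef
  set T := ContinuousLinearMap.adjoint D ∘L D with hTdef
  have hSpos : 0 ≤ S := by
    rw [nonneg_iff_isPositive]
    simpa [ContinuousLinearMap.one_def] using (isPositive_one (E := H)).adjoint_conj B
  have hTpos : 0 ≤ T := by
    rw [nonneg_iff_isPositive]
    simpa [ContinuousLinearMap.one_def] using (isPositive_one (E := H)).adjoint_conj D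
  set P := CFC.sqrt S with hPdef
  set Q := CFC.sqrt T with hQdef
  have hPpos : (0 : G →L[ℂ] G) ≤ P := CFC.sqrt_nonneg _
  have hQpos : (0 : G →L[ℂ] G) ≤ Q := CFC.sqrt_nonneg _
  have hPsa : IsSelfAdjoint P := .of_nonneg hPpos
  have hQsa : IsSelfAdjoint Q := .of_nonneg hQpos
  have hP2 : P ∘L P = S := CFC.sqrt_mul_sqrt_self S hSpos
  have hQ2 : Q ∘L Q = T := CFC.sqrt_mul_sqrt_self T hTpos
  have hPadj : ContinuousLinearMap.adjoint P = P := by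
    rw [← star_eq_adjoint]; exact hPsa
  have hQadj : ContinuousLinearMap.adjoint Q = Q := by
    rw [← star_eq_adjoint]; exact hQsa
  have hnorm : ∀ (A : G →L[ℂ] G) (E : G →L[ℂ] H), IsSelfAdjoint A →
      A ∘L A = ContinuousLinearMap.adjoint E ∘L E → ∀ x, ‖A x‖ = ‖E x‖ := by
    intro A E hA hAE x
    have h1 : (inner ℂ (A x) (A x) : ℂ) = inner ℂ (E x) (E x) := by
      have hAadj : ContinuousLinearMap.adjoint A = A := by
        rw [← star_eq_adjoint]; exact hA
      calc (inner ℂ (A x) (A x) : ℂ)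
          = inner ℂ ((ContinuousLinearMap.adjoint A) x) (A x) := by rw [hAadj]
        _ = inner ℂ x (A (A x)) := adjoint_inner_left A (A x) x
        _ = inner ℂ x ((A ∘L A) x) := rfl
        _ = inner ℂ x ((ContinuousLinearMap.adjoint E ∘L E) x) := by rw [hAE]
        _ = inner ℂ x ((ContinuousLinearMap.adjoint E) (E x)) := rfl
        _ = inner ℂ (E x) (E x) := adjoint_inner_right E x (E x)
    have h2 : ((‖A x‖ : ℂ)) ^ 2 = ((‖E x‖ : ℂ)) ^ 2 := by
      rwa [inner_self_eq_norm_sq_to_K, inner_self_eq_norm_sq_to_K] at h1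
    have h3 : ‖A x‖ ^ 2 = ‖E x‖ ^ 2 := by exact_mod_cast h2
    have := congrArg Real.sqrt h3
    simpa [Real.sqrt_sq, norm_nonneg] using this
  have hPB := hnorm P B hPsa hP2
  have hQD := hnorm Q D hQsa hQ2
  have hQP : ∀ x, ‖Q x‖ ≤ ‖P x‖ := fun x => by
    rw [hPB x, hQD x]; exact hD x
  obtain ⟨R, hR⟩ := douglas_aux P Q hQP
  have hRP : R ∘L P = Q := by ext x; exact hR x
  have hPR : P ∘L ContinuousLinearMap.adjoint R = Q := by
    have h := congrArg ContinuousLinearMap.adjoint hRP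
    rw [ContinuousLinearMap.adjoint_comp, hPadj, hQadj] at h
    exact h
  have hT : R ∘L S ∘L ContinuousLinearMap.adjoint R = T := by
    rw [← hP2, ← hQ2, ContinuousLinearMap.comp_assoc, hPR, ← ContinuousLinearMap.comp_assoc, hRP]
  rw [hTdef] at hT ⊢
  rw [← hT]
  exact I.comp_mem S hB (ContinuousLinearMap.adjoint R) R

/-- Let `𝔄(G)` be a symmetrically normed ideal on a separable Hilbert space `G`,
`C` a bounded operator on a Hilbert space `H`, and suppose `A = B*B ∈ 𝔄(G)`
with `B : G → H` bounded.  Then `B*CB ∈ 𝔄(G)`. -/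
theorem symm_normed_ideal_sandwich
    {G H : Type*} [NormedAddCommGroup G] [InnerProductSpace ℂ G]
    [NormedAddCommGroup H] [InnerProductSpace ℂ H]
    [CompleteSpace G] [CompleteSpace H] [TopologicalSpace.SeparableSpace G]
    (I : SymmNormedIdeal G) (B : G →L[ℂ] H) (C : H →L[ℂ] H)
    (hA : (ContinuousLinearMap.adjoint B) ∘L B ∈ I.carrier) :
    (ContinuousLinearMap.adjoint B) ∘L (C ∘L B) ∈ I.carrier := by
  set F : ℕ → H →L[ℂ] H := fun k => ContinuousLinearMap.adjoint C + (Complex.I ^ k) • 1 with hF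
  set T : ℕ → G →L[ℂ] G := fun k =>
    ContinuousLinearMap.adjoint (F k ∘L B) ∘L (F k ∘L B) with hT
  -- each `T k` belongs to the ideal
  have hTmem : ∀ k, T k ∈ I.carrier := by
    intro k
    set c : ℝ := ‖F k‖ + 1 with hc
    have hc0 : (0 : ℝ) < c := by positivity
    have hmem : ContinuousLinearMap.adjoint (((c : ℂ)) • B) ∘L (((c : ℂ)) • B) ∈ I.carrier := by
      have hadj : ContinuousLinearMap.adjoint (((c : ℂ)) • B)
          = (starRingEnd ℂ) (c : ℂ) • ContinuousLinearMap.adjoint B := map_smulₛₗ _ _ _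
      rw [hadj]
      have : ((starRingEnd ℂ) (c : ℂ) • ContinuousLinearMap.adjoint B) ∘L (((c : ℂ)) • B)
          = ((starRingEnd ℂ) (c : ℂ) * (c : ℂ)) • (ContinuousLinearMap.adjoint B ∘L B) := by
        rw [ContinuousLinearMap.smul_comp, ContinuousLinearMap.comp_smul, smul_smul]
      rw [this]
      exact I.smul_mem hA _
    have hle : ∀ x, ‖(F k ∘L B) x‖ ≤ ‖(((c : ℂ)) • B) x‖ := by
      intro x
      have h1 : ‖(F k ∘L B) x‖ ≤ ‖F k‖ * ‖B x‖ := (F k).le_opNorm (B x)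
      have h2 : ‖F k‖ * ‖B x‖ ≤ c * ‖B x‖ :=
        mul_le_mul_of_nonneg_right (by rw [hc]; linarith) (norm_nonneg _)
      have h3 : ‖(((c : ℂ)) • B) x‖ = c * ‖B x‖ := by
        rw [ContinuousLinearMap.smul_apply, norm_smul, Complex.norm_real,
          Real.norm_of_nonneg hc0.le]
      rw [h3]; exact h1.trans h2
    exact I.adjoint_comp_self_mem (((c : ℂ)) • B) (F k ∘L B) hmem hle
  -- polarization identity on `H`
  have hadjF : ∀ k, ContinuousLinearMap.adjoint (F k)
      = C + ((starRingEnd ℂ) (Complex.I ^ k)) • 1 := by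
    intro k
    rw [hF]
    simp only [map_add, map_smulₛₗ, ContinuousLinearMap.adjoint_adjoint]
    congr 1
    · congr 1
      exact ContinuousLinearMap.adjoint_id
  have hpolH : ∀ w : H,
      (ContinuousLinearMap.adjoint (F 0)) ((F 0) w)
        + (-Complex.I) • (ContinuousLinearMap.adjoint (F 1)) ((F 1) w)
        + (-1 : ℂ) • (ContinuousLinearMap.adjoint (F 2)) ((F 2) w)
        + Complex.I • (ContinuousLinearMap.adjoint (F 3)) ((F 3) w)
      = (4 : ℂ) • C w := by
    intro w
    simp only [hadjF]
    simp only [hF]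
    simp only [ContinuousLinearMap.add_apply, ContinuousLinearMap.smul_apply,
      ContinuousLinearMap.one_apply, map_add, map_smul, smul_add, smul_smul]
    match_scalars <;> (simp [pow_succ]; try norm_num)
  -- the combination identity on `G`
  have hid : T 0 + (-Complex.I) • T 1 + (-1 : ℂ) • T 2 + Complex.I • T 3
      = (4 : ℂ) • (ContinuousLinearMap.adjoint B ∘L (C ∘L B)) := by
    ext x
    have hw2 := congrArg (ContinuousLinearMap.adjoint B) (hpolH (B x))
    simp only [map_add, map_smul] at hw2
    simp only [hT, ContinuousLinearMap.adjoint_comp]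
    simpa only [ContinuousLinearMap.add_apply, ContinuousLinearMap.smul_apply,
      ContinuousLinearMap.comp_apply] using hw2
  have hX : T 0 + (-Complex.I) • T 1 + (-1 : ℂ) • T 2 + Complex.I • T 3 ∈ I.carrier := by
    refine I.add_mem _ (I.add_mem _ (I.add_mem _ (hTmem 0) _ (I.smul_mem (hTmem 1) _)) _
      (I.smul_mem (hTmem 2) _)) _ (I.smul_mem (hTmem 3) _)
  have h4 : (ContinuousLinearMap.adjoint B) ∘L (C ∘L B)
      = (4⁻¹ : ℂ) • (T 0 + (-Complex.I) • T 1 + (-1 : ℂ) • T 2 + Complex.I • T 3) := by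
    rw [hid, smul_smul]
    norm_num
  rw [h4]
  exact I.smul_mem hX _
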